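/- Let Ω be a Lipschitz graph domain with Lipschitz constant M and let ε > −1. Then there are constants 0 < c ≤ C, depending only on ε and M, such that for every x ∈ ∂Ω and every r > 0, c · r · max(|x|, r)^ε ≤ σ_ε(Δ_r(x)) ≤ C · r · max(|x|, r)^ε. -/

import Mathlib

open MeasureTheory Filter Set
open scoped ENNReal Topology Real NNReal

noncomputable section

/-- Parametrization of the graph `t ↦ (t, φ t)`, as a point of `ℂ ≃ ℝ²`. -/
def bmap (φ : ℝ → ℝ) (t : ℝ) : ℂ := ⟨t, φ t⟩

/-- The Lipschitz graph domain `Ω = {(x₁,x₂) : x₂ > φ(x₁)}`. -/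
def gDomain (φ : ℝ → ℝ) : Set ℂ := {z : ℂ | φ z.re < z.im}

/-- The boundary `∂Ω` of the graph domain. -/
def gBdry (φ : ℝ → ℝ) : Set ℂ := {z : ℂ | z.im = φ z.re}

/-- The Dirichlet portion `D = {(x₁, φ x₁) : x₁ < 0}` of the boundary. -/
def Dside (φ : ℝ → ℝ) : Set ℂ := {z : ℂ | z.im = φ z.re ∧ z.re < 0}

/-- The Neumann portion `N = {(x₁, φ x₁) : x₁ ≥ 0}` of the boundary. -/
def Nside (φ : ℝ → ℝ) : Set ℂ := {z : ℂ | z.im = φ z.re ∧ 0 ≤ z.re}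

/-- Arc length measure `dσ` on `∂Ω`: the pushforward of `√(1+φ'(t)²) dt`. -/
def sigma0 (φ : ℝ → ℝ) : Measure ℂ :=
  Measure.map (bmap φ)
    (volume.withDensity fun t => ENNReal.ofReal (Real.sqrt (1 + deriv φ t ^ 2)))

/-- Weighted arc length `dσ_ε = |x|^ε dσ` on `∂Ω`. -/
def sigmaW (φ : ℝ → ℝ) (ε : ℝ) : Measure ℂ :=
  (sigma0 φ).withDensity fun x => ENNReal.ofReal (‖x‖ ^ ε)

/-- The open cone `x + {r e^{iθ} : r > 0, |θ - π/2| < θ₀}` with vertex `x`. -/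
def ntCone (θ₀ : ℝ) (x : ℂ) : Set ℂ :=
  {z : ℂ | z ≠ x ∧ |Complex.arg (z - x) - π / 2| < θ₀}

/-- The nontangential approach region `Γ(x) ∩ Ω`. -/
def ntRegion (φ : ℝ → ℝ) (θ₀ : ℝ) (x : ℂ) : Set ℂ := ntCone θ₀ x ∩ gDomain φ

/-- The nontangential maximal function `v*(x) = sup_{y ∈ Γ(x)} v(y)` (for `v ≥ 0`),
valued in `ℝ≥0∞`. -/
def ntMax (φ : ℝ → ℝ) (θ₀ : ℝ) (v : ℂ → ℝ) (x : ℂ) : ℝ≥0∞ :=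
  ⨆ y ∈ ntRegion φ θ₀ x, ENNReal.ofReal (v y)

/-- Nontangential limit of `v` at the boundary point `x`. -/
def NTLim (φ : ℝ → ℝ) (θ₀ : ℝ) {α : Type*} [TopologicalSpace α]
    (v : ℂ → α) (x : ℂ) (c : α) : Prop :=
  Filter.Tendsto v (nhdsWithin x (ntRegion φ θ₀ x)) (nhds c)

/-- Gradient of `u : ℂ → ℝ`, written as a point of `ℂ ≃ ℝ²`. -/
def grad (u : ℂ → ℝ) (z : ℂ) : ℂ := ⟨fderiv ℝ u z 1, fderiv ℝ u z Complex.I⟩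

/-- Euclidean dot product on `ℂ ≃ ℝ²`. -/
def dotR (a b : ℂ) : ℝ := a.re * b.re + a.im * b.im

/-- Laplacian of `u : ℂ → ℝ`. -/
def lap (u : ℂ → ℝ) (z : ℂ) : ℝ :=
  fderiv ℝ (fun w => fderiv ℝ u w 1) z 1 + fderiv ℝ (fun w => fderiv ℝ u w Complex.I) z Complex.I

/-- Divergence of the vector field `F : ℂ → ℂ ≃ ℝ²`. -/
def divg (F : ℂ → ℂ) (z : ℂ) : ℝ :=
  fderiv ℝ (fun w => (F w).re) z 1 + fderiv ℝ (fun w => (F w).im) z Complex.I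

/-- `u` is harmonic on `s`. -/
def HarmOn (u : ℂ → ℝ) (s : Set ℂ) : Prop :=
  ContDiffOn ℝ 2 u s ∧ ∀ z ∈ s, lap u z = 0

/-- Outer unit normal `ν = (φ'(x₁), -1)/√(1+φ'(x₁)²)` at a boundary point. -/
def nuVec (φ : ℝ → ℝ) (x : ℂ) : ℂ :=
  (Real.sqrt (1 + deriv φ x.re ^ 2))⁻¹ • (⟨deriv φ x.re, -1⟩ : ℂ)

/-- Unit tangent `T = (1, φ'(x₁))/√(1+φ'(x₁)²)` at a boundary point. -/
def tanVec (φ : ℝ → ℝ) (x : ℂ) : ℂ :=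
  (Real.sqrt (1 + deriv φ x.re ^ 2))⁻¹ • (⟨1, deriv φ x.re⟩ : ℂ)

/-- Branch of the argument with values in `(-π/2, 3π/2]`. -/
def argB (z : ℂ) : ℝ :=
  if Complex.arg z < -(π / 2) then Complex.arg z + 2 * π else Complex.arg z

/-- The branch `z^ε = r^ε e^{iεθ}`, `θ ∈ (-π/2, 3π/2]`, of the complex power,
holomorphic off the closed negative imaginary axis. -/
def cpowB (ε : ℝ) (z : ℂ) : ℂ :=
  ((‖z‖ ^ ε : ℝ) : ℂ) * Complex.exp (Complex.I * ((ε * argB z : ℝ) : ℂ))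

/-- `h` is the arc-length derivative `df/dσ` of `f` along the part of the boundary
parametrized by `t ∈ S`. -/
def HasArcDeriv (φ : ℝ → ℝ) (f h : ℂ → ℝ) (S : Set ℝ) : Prop :=
  ∀ t₁ ∈ S, ∀ t₂ ∈ S,
    IntervalIntegrable (fun t => h (bmap φ t) * Real.sqrt (1 + deriv φ t ^ 2)) volume t₁ t₂ ∧
    f (bmap φ t₂) - f (bmap φ t₁) = ∫ t in t₁..t₂, h (bmap φ t) * Real.sqrt (1 + deriv φ t ^ 2)

/-- Membership in `L^p(S, μ)`. -/
def MemLpB (p : ℝ) (μ : Measure ℂ) (S : Set ℂ) (f : ℂ → ℝ) : Prop :=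
  AEMeasurable f (μ.restrict S) ∧ (∫⁻ x in S, ENNReal.ofReal |f x| ^ p ∂μ) < ⊤

/-- The `L^p(S, μ)` norm. -/
def lpN (p : ℝ) (μ : Measure ℂ) (S : Set ℂ) (f : ℂ → ℝ) : ℝ≥0∞ :=
  (∫⁻ x in S, ENNReal.ofReal |f x| ^ p ∂μ) ^ (1 / p)

/-- The `L^p(μ)` norm of the nontangential maximal function of `v`. -/
def ntMaxLp (φ : ℝ → ℝ) (θ₀ p : ℝ) (μ : Measure ℂ) (v : ℂ → ℝ) : ℝ≥0∞ :=
  (∫⁻ x, ntMax φ θ₀ v x ^ p ∂μ) ^ (1 / p)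

/-- `u` solves the mixed problem for `L^p(μ)` with Dirichlet data `fD` on `D` and
Neumann data `fN` on `N`. -/
def MixedSol (φ : ℝ → ℝ) (θ₀ p : ℝ) (μ : Measure ℂ) (fD fN : ℂ → ℝ) (u : ℂ → ℝ) : Prop :=
  HarmOn u (gDomain φ) ∧
  (∀ᵐ x ∂(sigma0 φ), x ∈ Dside φ → NTLim φ θ₀ u x (fD x)) ∧
  (∃ g : ℂ → ℂ, (∀ᵐ x ∂(sigma0 φ), NTLim φ θ₀ (grad u) x (g x)) ∧
      ∀ᵐ x ∂(sigma0 φ), x ∈ Nside φ → dotR (g x) (nuVec φ x) = fN x) ∧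
  (∫⁻ x, ntMax φ θ₀ (fun y => ‖grad u y‖) x ^ p ∂μ) < ⊤

/-- `u` solves the Neumann problem for `L^p(μ)` with data `f`. -/
def NeumannSol (φ : ℝ → ℝ) (θ₀ p : ℝ) (μ : Measure ℂ) (f : ℂ → ℝ) (u : ℂ → ℝ) : Prop :=
  HarmOn u (gDomain φ) ∧
  (∃ g : ℂ → ℂ, (∀ᵐ x ∂(sigma0 φ), NTLim φ θ₀ (grad u) x (g x)) ∧
      ∀ᵐ x ∂(sigma0 φ), dotR (g x) (nuVec φ x) = f x) ∧
  (∫⁻ x, ntMax φ θ₀ (fun y => ‖grad u y‖) x ^ p ∂μ) < ⊤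

/-- `u` solves the regularity problem for `L^p(μ)` with data `f`. -/
def RegSol (φ : ℝ → ℝ) (θ₀ p : ℝ) (μ : Measure ℂ) (f : ℂ → ℝ) (u : ℂ → ℝ) : Prop :=
  HarmOn u (gDomain φ) ∧
  (∀ᵐ x ∂(sigma0 φ), NTLim φ θ₀ u x (f x)) ∧
  (∃ g : ℂ → ℂ, ∀ᵐ x ∂(sigma0 φ), NTLim φ θ₀ (grad u) x (g x)) ∧
  (∫⁻ x, ntMax φ θ₀ (fun y => ‖grad u y‖) x ^ p ∂μ) < ⊤

/-- An `H¹(dσ_ε)`-atom. -/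
def H1Atom (φ : ℝ → ℝ) (ε : ℝ) (a : ℂ → ℝ) : Prop :=
  ∃ x ∈ gBdry φ, ∃ s : ℝ, 0 < s ∧
    (∀ y, y ∉ Metric.ball x s ∩ gBdry φ → a y = 0) ∧
    (∫ y, a y ∂(sigma0 φ)) = 0 ∧
    ∀ y, |a y| ≤ ((sigmaW φ ε (Metric.ball x s ∩ gBdry φ)).toReal)⁻¹

/-- An atomic representation `f = Σ λ_j a_j` (convergence in `L¹(dσ_ε)`). -/
def H1Rep (φ : ℝ → ℝ) (ε : ℝ) (f : ℂ → ℝ) (lam : ℕ → ℝ) (a : ℕ → ℂ → ℝ) : Prop :=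
  (∀ j, H1Atom φ ε (a j)) ∧ Summable (fun j => |lam j|) ∧
  Filter.Tendsto
    (fun n => ∫⁻ x, ENNReal.ofReal |f x - ∑ j ∈ Finset.range n, lam j * a j x| ∂(sigmaW φ ε))
    Filter.atTop (nhds 0)

def MemH1 (φ : ℝ → ℝ) (ε : ℝ) (f : ℂ → ℝ) : Prop := ∃ lam a, H1Rep φ ε f lam a

def H1norm (φ : ℝ → ℝ) (ε : ℝ) (f : ℂ → ℝ) : ℝ≥0∞ :=
  sInf {c | ∃ lam a, H1Rep φ ε f lam a ∧ c = ∑' j, ENNReal.ofReal |lam j|}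

/-- An `H^{1,1}(dσ_ε)`-atom: an indefinite arc-length integral of an `H¹(dσ_ε)`-atom. -/
def H11Atom (φ : ℝ → ℝ) (ε : ℝ) (A : ℂ → ℝ) : Prop :=
  ∃ a, H1Atom φ ε a ∧ ∃ t₀ : ℝ, ∀ t : ℝ,
    A (bmap φ t) = ∫ s in t₀..t, a (bmap φ s) * Real.sqrt (1 + deriv φ s ^ 2)

def H11Rep (φ : ℝ → ℝ) (ε : ℝ) (F : ℂ → ℝ) (lam : ℕ → ℝ) (A : ℕ → ℂ → ℝ) : Prop :=
  (∀ j, H11Atom φ ε (A j)) ∧ Summable (fun j => |lam j|) ∧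
  ∀ᵐ x ∂(sigma0 φ), HasSum (fun j => lam j * A j x) (F x)

def MemH11 (φ : ℝ → ℝ) (ε : ℝ) (F : ℂ → ℝ) : Prop := ∃ lam A, H11Rep φ ε F lam A

def H11norm (φ : ℝ → ℝ) (ε : ℝ) (F : ℂ → ℝ) : ℝ≥0∞ :=
  sInf {c | ∃ lam A, H11Rep φ ε F lam A ∧ c = ∑' j, ENNReal.ofReal |lam j|}

/-- Membership in `H¹(S, dσ_ε)`: restriction to `S` of an element of `H¹(dσ_ε)`. -/
def MemH1On (φ : ℝ → ℝ) (ε : ℝ) (S : Set ℂ) (f : ℂ → ℝ) : Prop :=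
  ∃ g, MemH1 φ ε g ∧ Set.EqOn f g S

def H1normOn (φ : ℝ → ℝ) (ε : ℝ) (S : Set ℂ) (f : ℂ → ℝ) : ℝ≥0∞ :=
  sInf {c | ∃ g lam a, H1Rep φ ε g lam a ∧ Set.EqOn f g S ∧ c = ∑' j, ENNReal.ofReal |lam j|}

def MemH11On (φ : ℝ → ℝ) (ε : ℝ) (S : Set ℂ) (F : ℂ → ℝ) : Prop :=
  ∃ G, MemH11 φ ε G ∧ Set.EqOn F G S

def H11normOn (φ : ℝ → ℝ) (ε : ℝ) (S : Set ℂ) (F : ℂ → ℝ) : ℝ≥0∞ :=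
  sInf {c | ∃ G lam A, H11Rep φ ε G lam A ∧ Set.EqOn F G S ∧ c = ∑' j, ENNReal.ofReal |lam j|}

/-- An `H¹(N, dσ_ε)`-atom: the restriction to `N` of an `H¹(dσ_ε)`-atom. -/
def H1AtomN (φ : ℝ → ℝ) (ε : ℝ) (a : ℂ → ℝ) : Prop :=
  ∃ b, H1Atom φ ε b ∧ Set.EqOn a b (Nside φ)

----------------------------------------------------------------
-- Auxiliary lemmas for statement8
----------------------------------------------------------------

section Statement8Aux

open scoped Real ENNReal

lemma s8_rpow_comp {K a b : ℝ} (hK : 1 ≤ K) (ha : 0 < a) (hb : 0 < b)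
    (h1 : a ≤ K * b) (h2 : b ≤ K * a) (ε : ℝ) : a ^ ε ≤ K ^ |ε| * b ^ ε := by
  rcases le_or_gt 0 ε with hε | hε
  · rw [abs_of_nonneg hε]
    calc a ^ ε ≤ (K * b) ^ ε := Real.rpow_le_rpow ha.le h1 hε
    _ = K ^ ε * b ^ ε := Real.mul_rpow (by linarith) hb.le
  · rw [abs_of_neg hε]
    have hKpos : (0:ℝ) < K := by linarith
    have : b / K ≤ a := (div_le_iff₀ hKpos).2 (by linarith [h2])
    calc a ^ ε ≤ (b / K) ^ ε := Real.rpow_le_rpow_of_nonpos (div_pos hb hKpos) this hε.le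
    _ = b ^ ε / K ^ ε := Real.div_rpow hb.le hKpos.le ε
    _ = K ^ (-ε) * b ^ ε := by
        rw [Real.rpow_neg hKpos.le]; ring

lemma s8_rpow_comp' {K a b : ℝ} (hK : 1 ≤ K) (ha : 0 < a) (hb : 0 < b)
    (h1 : a ≤ K * b) (h2 : b ≤ K * a) (ε : ℝ) : K ^ (-|ε|) * a ^ ε ≤ b ^ ε := by
  have h := s8_rpow_comp hK ha hb h1 h2 ε
  have hKp : (0:ℝ) < K ^ |ε| := Real.rpow_pos_of_pos (by linarith) _
  rw [Real.rpow_neg (by linarith)]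
  calc (K^|ε|)⁻¹ * a^ε ≤ (K^|ε|)⁻¹ * (K^|ε| * b^ε) :=
    mul_le_mul_of_nonneg_left h (by positivity)
  _ = b^ε := by field_simp

lemma s8_abs_deriv_le {φ : ℝ → ℝ} {M : ℝ} (hφ : ∀ s t, |φ s - φ t| ≤ M * |s - t|)
    (hM0 : 0 ≤ M) (t : ℝ) : |deriv φ t| ≤ M := by
  have : ‖fderiv ℝ φ t‖ ≤ M := by
    apply norm_fderiv_le_of_lip' ℝ hM0
    filter_upwards with x
    simpa [Real.norm_eq_abs] using hφ x t
  calc |deriv φ t| = ‖fderiv ℝ φ t 1‖ := by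
        rw [deriv, Real.norm_eq_abs]
  _ ≤ ‖fderiv ℝ φ t‖ * ‖(1:ℝ)‖ := (fderiv ℝ φ t).le_opNorm 1
  _ ≤ M := by simpa using this

lemma s8_bmap_dist {φ : ℝ → ℝ} {M : ℝ} (hφ : ∀ s t, |φ s - φ t| ≤ M * |s - t|)
    (hM0 : 0 ≤ M) (s t : ℝ) :
    |t - s| ≤ ‖bmap φ t - bmap φ s‖ ∧
    ‖bmap φ t - bmap φ s‖ ≤ Real.sqrt (1 + M^2) * |t - s| := by
  have hre : (bmap φ t - bmap φ s).re = t - s := rfl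
  have him : (bmap φ t - bmap φ s).im = φ t - φ s := rfl
  constructor
  · calc |t - s| = |(bmap φ t - bmap φ s).re| := by rw [hre]
    _ ≤ ‖_‖ := Complex.abs_re_le_norm _
  · rw [Complex.norm_def, Complex.normSq_apply, hre, him]
    have h1 : (φ t - φ s)^2 ≤ M^2 * (t-s)^2 := by
      have := hφ t s
      nlinarith [abs_nonneg (φ t - φ s), sq_abs (φ t - φ s), sq_abs (t - s),
        abs_nonneg (t - s), mul_nonneg hM0 (abs_nonneg (t-s))]
    calc Real.sqrt ((t-s)*(t-s) + (φ t - φ s)*(φ t - φ s))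
        ≤ Real.sqrt ((1 + M^2) * (t-s)^2) := by
          apply Real.sqrt_le_sqrt; nlinarith
    _ = Real.sqrt (1 + M^2) * Real.sqrt ((t-s)^2) := by
          rw [Real.sqrt_mul (by positivity)]
    _ = Real.sqrt (1 + M^2) * |t - s| := by rw [Real.sqrt_sq_eq_abs]

lemma s8_lint_pos {ε : ℝ} (hε : -1 < ε) {L : ℝ} (hL : 0 < L) :
    ∫⁻ t in Set.Ioo (0:ℝ) L, ENNReal.ofReal (|t| ^ ε) = ENNReal.ofReal (L ^ (ε+1) / (ε+1)) := by
  have hint : IntervalIntegrable (fun t : ℝ => t ^ ε) volume 0 L :=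
    intervalIntegral.intervalIntegrable_rpow' hε
  have hIoc : IntegrableOn (fun t : ℝ => t ^ ε) (Set.Ioc 0 L) volume := by
    simpa [intervalIntegrable_iff, Set.uIoc_of_le hL.le] using hint
  have hIoo : IntegrableOn (fun t : ℝ => |t| ^ ε) (Set.Ioo 0 L) volume := by
    apply (hIoc.mono_set Set.Ioo_subset_Ioc_self).congr_fun ?_ measurableSet_Ioo
    intro t ht; simp only []; rw [abs_of_pos ht.1]
  rw [← MeasureTheory.ofReal_integral_eq_lintegral_ofReal hIoo ?_]
  · congr 1
    have : ∫ t in Set.Ioo (0:ℝ) L, |t| ^ ε = ∫ t in Set.Ioo (0:ℝ) L, t ^ ε := by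
      apply setIntegral_congr_fun measurableSet_Ioo
      intro t ht; simp only []; rw [abs_of_pos ht.1]
    rw [this, ← integral_Ioc_eq_integral_Ioo, ← intervalIntegral.integral_of_le hL.le,
      integral_rpow (Or.inl hε)]
    rw [Real.zero_rpow (by linarith), sub_zero]
  · filter_upwards with t
    positivity

lemma s8_lint_neg_set (ε a b : ℝ) :
    ∫⁻ t in Set.Ioo a b, ENNReal.ofReal (|t| ^ ε)
      = ∫⁻ t in Set.Ioo (-b) (-a), ENNReal.ofReal (|t| ^ ε) := by
  have h := (Measure.measurePreserving_neg (volume : Measure ℝ)).setLIntegral_comp_preimage_emb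
    (measurableEmbedding_neg) (fun t => ENNReal.ofReal (|t| ^ ε)) (Set.Ioo a b)
  have hpre : (Neg.neg : ℝ → ℝ) ⁻¹' (Set.Ioo a b) = Set.Ioo (-b) (-a) := by
    ext t; simp [and_comm, neg_lt, lt_neg]
  rw [hpre] at h
  rw [← h]
  apply lintegral_congr; intro t; rw [abs_neg]

lemma s8_lint_sym {ε : ℝ} (hε : -1 < ε) {L : ℝ} (hL : 0 < L) :
    ∫⁻ t in Set.Ioo (-L) L, ENNReal.ofReal (|t| ^ ε)
      ≤ ENNReal.ofReal (2 * (L ^ (ε+1) / (ε+1))) := by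
  have hsub : Set.Ioo (-L) L ⊆ Set.Ioo (-L) 0 ∪ Set.Icc 0 L := by
    intro t ht; rcases lt_or_ge t 0 with h | h
    · exact Or.inl ⟨ht.1, h⟩
    · exact Or.inr ⟨h, ht.2.le⟩
  calc ∫⁻ t in Set.Ioo (-L) L, ENNReal.ofReal (|t| ^ ε)
      ≤ ∫⁻ t in Set.Ioo (-L) 0 ∪ Set.Icc 0 L, ENNReal.ofReal (|t| ^ ε) :=
        lintegral_mono_set hsub
  _ ≤ (∫⁻ t in Set.Ioo (-L) 0, ENNReal.ofReal (|t| ^ ε))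
      + ∫⁻ t in Set.Icc 0 L, ENNReal.ofReal (|t| ^ ε) := lintegral_union_le _ _ _
  _ = (∫⁻ t in Set.Ioo 0 L, ENNReal.ofReal (|t| ^ ε))
      + ∫⁻ t in Set.Ioo 0 L, ENNReal.ofReal (|t| ^ ε) := by
        rw [s8_lint_neg_set, neg_zero, neg_neg]
        congr 1
        rw [← Measure.restrict_congr_set MeasureTheory.Ioo_ae_eq_Icc]
  _ = ENNReal.ofReal (L ^ (ε+1) / (ε+1)) + ENNReal.ofReal (L ^ (ε+1) / (ε+1)) := by
        rw [s8_lint_pos hε hL]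
  _ = ENNReal.ofReal (2 * (L ^ (ε+1) / (ε+1))) := by
        have h1 : (0:ℝ) < ε + 1 := by linarith
        have h2 : (0:ℝ) ≤ L ^ (ε+1) / (ε+1) := by positivity
        rw [← ENNReal.ofReal_add h2 h2]; ring_nf

lemma s8_meas_integrand (ε : ℝ) : Measurable (fun t : ℝ => ENNReal.ofReal (|t| ^ ε)) :=
  ENNReal.measurable_ofReal.comp ((measurable_id.abs).pow_const ε)

lemma s8_core_const_lower {ε : ℝ} {S : Set ℝ} {v κ : ℝ} (hv : 0 ≤ v)
    (hvol : ENNReal.ofReal κ ≤ volume S)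
    (hpt : ∀ t ∈ S, v ≤ |t| ^ ε) :
    ENNReal.ofReal (v * κ) ≤ ∫⁻ t in S, ENNReal.ofReal (|t| ^ ε) := by
  calc ENNReal.ofReal (v * κ) = ENNReal.ofReal v * ENNReal.ofReal κ := by
        rcases le_or_gt 0 κ with h | h
        · exact ENNReal.ofReal_mul hv
        · rw [ENNReal.ofReal_of_nonpos h.le, ENNReal.ofReal_of_nonpos (by nlinarith)]
          simp
  _ ≤ ENNReal.ofReal v * volume S := by gcongr
  _ = ∫⁻ _ in S, ENNReal.ofReal v := (setLIntegral_const S _).symm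
  _ ≤ ∫⁻ t in S, ENNReal.ofReal (|t| ^ ε) :=
      setLIntegral_mono (s8_meas_integrand ε) (fun t ht => ENNReal.ofReal_le_ofReal (hpt t ht))

lemma s8_core_const_upper {ε : ℝ} {S : Set ℝ} {v κ : ℝ}
    (hvol : volume S ≤ ENNReal.ofReal κ)
    (hpt : ∀ t ∈ S, |t| ^ ε ≤ v) :
    ∫⁻ t in S, ENNReal.ofReal (|t| ^ ε) ≤ ENNReal.ofReal (v * κ) := by
  have hv : (0:ℝ) ≤ v ∨ S = ∅ := by
    rcases Set.eq_empty_or_nonempty S with h | ⟨t, ht⟩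
    · exact Or.inr h
    · exact Or.inl (le_trans (Real.rpow_nonneg (abs_nonneg t) ε) (hpt t ht))
  rcases hv with hv | hv
  · calc ∫⁻ t in S, ENNReal.ofReal (|t| ^ ε) ≤ ∫⁻ _ in S, ENNReal.ofReal v :=
          setLIntegral_mono measurable_const (fun t ht => ENNReal.ofReal_le_ofReal (hpt t ht))
    _ = ENNReal.ofReal v * volume S := setLIntegral_const S _
    _ ≤ ENNReal.ofReal v * ENNReal.ofReal κ := by gcongr
    _ = ENNReal.ofReal (v * κ) := (ENNReal.ofReal_mul hv).symm
  · simp [hv]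

lemma s8_core_nonneg {ε : ℝ} (hε : -1 < ε) {s r : ℝ} (hs : 0 ≤ s) (hr : 0 < r) :
    ENNReal.ofReal ((min (2*(2:ℝ)^(-|ε|)) ((1/2)*(12:ℝ)^(-|ε|))) * (r * (max s r) ^ ε))
      ≤ ∫⁻ t in Set.Ioo (s-r) (s+r), ENNReal.ofReal (|t| ^ ε) ∧
    ∫⁻ t in Set.Ioo (s-r) (s+r), ENNReal.ofReal (|t| ^ ε)
      ≤ ENNReal.ofReal ((max (2*(2:ℝ)^(|ε|)) (6*(3:ℝ)^(|ε|)/(ε+1))) * (r * (max s r) ^ ε)) := by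
  set X := max s r with hX
  have hXr : r ≤ X := le_max_right _ _
  have hXpos : 0 < X := lt_of_lt_of_le hr hXr
  have hε1 : (0:ℝ) < ε + 1 := by linarith
  rcases le_or_gt (2*r) s with hc | hc
  · have hXs : X = s := max_eq_left (by linarith)
    have hbd : ∀ t ∈ Set.Ioo (s-r) (s+r),
        (2:ℝ)^(-|ε|) * s ^ ε ≤ |t| ^ ε ∧ |t| ^ ε ≤ 2^(|ε|) * s ^ ε := by
      intro t ht
      have ht0 : 0 < t := by rcases ht with ⟨h1, h2⟩; linarith
      have habs : |t| = t := abs_of_pos ht0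
      have h1 : t ≤ 2 * s := by rcases ht with ⟨_, h2⟩; linarith
      have h2 : s ≤ 2 * t := by rcases ht with ⟨h1', _⟩; linarith
      have hs0 : 0 < s := by linarith
      constructor
      · rw [habs]; exact s8_rpow_comp' (by norm_num) hs0 ht0 h2 h1 ε
      · rw [habs]; exact s8_rpow_comp (by norm_num) ht0 hs0 h1 h2 ε
    constructor
    · calc ENNReal.ofReal ((min (2*(2:ℝ)^(-|ε|)) ((1/2)*(12:ℝ)^(-|ε|))) * (r * X ^ ε))
          ≤ ENNReal.ofReal ((2^(-|ε|) * s ^ ε) * (2*r)) := by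
            apply ENNReal.ofReal_le_ofReal
            rw [hXs]
            have h1 : min (2*(2:ℝ)^(-|ε|)) ((1/2)*(12:ℝ)^(-|ε|)) ≤ 2*(2:ℝ)^(-|ε|) := min_le_left _ _
            have hsε : (0:ℝ) < s ^ ε := Real.rpow_pos_of_pos (by linarith) ε
            calc (min (2*(2:ℝ)^(-|ε|)) ((1/2)*(12:ℝ)^(-|ε|))) * (r * s ^ ε)
                ≤ (2*(2:ℝ)^(-|ε|)) * (r * s ^ ε) :=
                  mul_le_mul_of_nonneg_right h1 (by positivity)
            _ = (2^(-|ε|) * s ^ ε) * (2*r) := by ring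
      _ ≤ _ := by
            apply s8_core_const_lower (by positivity)
            · rw [Real.volume_Ioo]
              apply ENNReal.ofReal_le_ofReal; ring_nf; linarith
            · exact fun t ht => (hbd t ht).1
    · calc ∫⁻ t in Set.Ioo (s-r) (s+r), ENNReal.ofReal (|t| ^ ε)
          ≤ ENNReal.ofReal ((2^(|ε|) * s ^ ε) * (2*r)) := by
            apply s8_core_const_upper
            · rw [Real.volume_Ioo]; apply ENNReal.ofReal_le_ofReal; linarith
            · exact fun t ht => (hbd t ht).2
      _ ≤ _ := by
            apply ENNReal.ofReal_le_ofReal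
            rw [hXs]
            have h1 : 2*(2:ℝ)^(|ε|) ≤ max (2*(2:ℝ)^(|ε|)) (6*(3:ℝ)^(|ε|)/(ε+1)) := le_max_left _ _
            have hsε : (0:ℝ) < s ^ ε := Real.rpow_pos_of_pos (by linarith) ε
            calc (2^(|ε|) * s ^ ε) * (2*r) = (2*(2:ℝ)^(|ε|)) * (r * s ^ ε) := by ring
            _ ≤ _ := mul_le_mul_of_nonneg_right h1 (by positivity)
  · have hX2r : X ≤ 2*r := max_le (by linarith) (by linarith)
    have hXε : X ^ ε ≤ 2^(|ε|) * r ^ ε := s8_rpow_comp (by norm_num) hXpos hr hX2r (by linarith) ε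
    have hrε : r ^ ε ≤ 2^(|ε|) * X ^ ε := s8_rpow_comp (by norm_num) hr hXpos (by linarith) hX2r ε
    constructor
    · have hsub : Set.Ioo (s+r/2) (s+r) ⊆ Set.Ioo (s-r) (s+r) := by
        apply Set.Ioo_subset_Ioo (by linarith) le_rfl
      calc ENNReal.ofReal ((min (2*(2:ℝ)^(-|ε|)) ((1/2)*(12:ℝ)^(-|ε|))) * (r * X ^ ε))
          ≤ ENNReal.ofReal (((12:ℝ)^(-|ε|) * X ^ ε) * (r/2)) := by
            apply ENNReal.ofReal_le_ofReal
            have h1 : min (2*(2:ℝ)^(-|ε|)) ((1/2)*(12:ℝ)^(-|ε|)) ≤ (1/2)*(12:ℝ)^(-|ε|) :=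
              min_le_right _ _
            have hXε2 : (0:ℝ) < X ^ ε := Real.rpow_pos_of_pos hXpos ε
            calc (min (2*(2:ℝ)^(-|ε|)) ((1/2)*(12:ℝ)^(-|ε|))) * (r * X ^ ε)
                ≤ ((1/2)*(12:ℝ)^(-|ε|)) * (r * X ^ ε) :=
                  mul_le_mul_of_nonneg_right h1 (by positivity)
            _ = ((12:ℝ)^(-|ε|) * X ^ ε) * (r/2) := by ring
      _ ≤ ∫⁻ t in Set.Ioo (s+r/2) (s+r), ENNReal.ofReal (|t| ^ ε) := by
            apply s8_core_const_lower (by positivity)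
            · rw [Real.volume_Ioo]; apply ENNReal.ofReal_le_ofReal; linarith
            · intro t ht
              have ht0 : 0 < t := by rcases ht with ⟨h1, _⟩; linarith
              rw [abs_of_pos ht0]
              have h1 : X ≤ 12 * t := by rcases ht with ⟨h1, _⟩; linarith
              have h2 : t ≤ 12 * X := by rcases ht with ⟨_, h2⟩; nlinarith
              exact s8_rpow_comp' (by norm_num : (1:ℝ) ≤ 12) hXpos ht0 h1 h2 ε
      _ ≤ _ := lintegral_mono_set hsub
    · have hsub : Set.Ioo (s-r) (s+r) ⊆ Set.Ioo (-(3*r)) (3*r) := by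
        apply Set.Ioo_subset_Ioo (by linarith) (by linarith)
      calc ∫⁻ t in Set.Ioo (s-r) (s+r), ENNReal.ofReal (|t| ^ ε)
          ≤ ∫⁻ t in Set.Ioo (-(3*r)) (3*r), ENNReal.ofReal (|t| ^ ε) := lintegral_mono_set hsub
      _ ≤ ENNReal.ofReal (2 * ((3*r) ^ (ε+1) / (ε+1))) := s8_lint_sym hε (by linarith)
      _ ≤ _ := by
            apply ENNReal.ofReal_le_ofReal
            have h3X : (3*r) ^ ε ≤ 3^(|ε|) * X ^ ε :=
              s8_rpow_comp (by norm_num) (by linarith) hXpos (by nlinarith) (by nlinarith) ε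
            have hXε2 : (0:ℝ) < X ^ ε := Real.rpow_pos_of_pos hXpos ε
            have hexp : (3*r) ^ (ε+1) = (3*r)^ε * (3*r) := by
              rw [Real.rpow_add (by linarith), Real.rpow_one]
            have hmax : 6*(3:ℝ)^(|ε|)/(ε+1) ≤ max (2*(2:ℝ)^(|ε|)) (6*(3:ℝ)^(|ε|)/(ε+1)) :=
              le_max_right _ _
            have h3 : (0:ℝ) < (3:ℝ)^(|ε|) := Real.rpow_pos_of_pos (by norm_num) _
            calc 2 * ((3*r) ^ (ε+1) / (ε+1)) = 6 * (3*r)^ε / (ε+1) * r := by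
                  rw [hexp]; ring
            _ ≤ 6 * ((3:ℝ)^(|ε|) * X ^ ε) / (ε+1) * r := by gcongr
            _ = (6*(3:ℝ)^(|ε|)/(ε+1)) * (r * X ^ ε) := by ring
            _ ≤ _ := mul_le_mul_of_nonneg_right hmax (by positivity)

lemma s8_core {ε : ℝ} (hε : -1 < ε) (s : ℝ) {r : ℝ} (hr : 0 < r) :
    ENNReal.ofReal ((min (2*(2:ℝ)^(-|ε|)) ((1/2)*(12:ℝ)^(-|ε|))) * (r * (max |s| r) ^ ε))
      ≤ ∫⁻ t in Set.Ioo (s-r) (s+r), ENNReal.ofReal (|t| ^ ε) ∧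
    ∫⁻ t in Set.Ioo (s-r) (s+r), ENNReal.ofReal (|t| ^ ε)
      ≤ ENNReal.ofReal ((max (2*(2:ℝ)^(|ε|)) (6*(3:ℝ)^(|ε|)/(ε+1))) * (r * (max |s| r) ^ ε)) := by
  rcases le_or_gt 0 s with hs | hs
  · rw [abs_of_nonneg hs]; exact s8_core_nonneg hε hs hr
  · have h : ∫⁻ t in Set.Ioo (s-r) (s+r), ENNReal.ofReal (|t| ^ ε)
        = ∫⁻ t in Set.Ioo (-s-r) (-s+r), ENNReal.ofReal (|t| ^ ε) := by
      rw [s8_lint_neg_set]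
      congr 2 <;> ring
    rw [abs_of_neg hs, h]
    exact s8_core_nonneg hε (by linarith) hr

lemma s8_bmap_eq (φ : ℝ → ℝ) (t : ℝ) : bmap φ t = (t : ℂ) + (φ t : ℂ) * Complex.I := by
  apply Complex.ext <;> simp [bmap]

lemma s8_bmap_continuous {φ : ℝ → ℝ} (hc : Continuous φ) : Continuous (bmap φ) := by
  simp only [funext (s8_bmap_eq φ)]
  exact Complex.continuous_ofReal.add
    ((Complex.continuous_ofReal.comp hc).mul continuous_const)

lemma s8_sigmaW_eq {φ : ℝ → ℝ} (hc : Continuous φ) (ε : ℝ) {B : Set ℂ} (hB : MeasurableSet B) :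
    sigmaW φ ε B = ∫⁻ t in bmap φ ⁻¹' B,
      ENNReal.ofReal (Real.sqrt (1 + deriv φ t ^ 2))
        * ENNReal.ofReal (‖bmap φ t‖ ^ ε) := by
  have hmb : Measurable (bmap φ) := (s8_bmap_continuous hc).measurable
  have hg : Measurable (fun x : ℂ => ENNReal.ofReal (‖x‖ ^ ε)) :=
    ENNReal.measurable_ofReal.comp (continuous_norm.measurable.pow_const ε)
  have hw : Measurable (fun t : ℝ => ENNReal.ofReal (Real.sqrt (1 + deriv φ t ^ 2))) := by
    apply ENNReal.measurable_ofReal.comp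
    exact Real.continuous_sqrt.measurable.comp
      ((measurable_const.add ((measurable_deriv φ).pow_const 2)))
  rw [sigmaW, withDensity_apply _ hB, sigma0, setLIntegral_map hB hg hmb,
    restrict_withDensity (hmb hB)]
  exact lintegral_withDensity_eq_lintegral_mul _ hw (hg.comp hmb)

end Statement8Aux

set_option maxHeartbeats 2000000 in
/-- for `ε > −1`, `σ_ε(Δ_r(x)) ≈ r · max(|x|, r)^ε` for all `x ∈ ∂Ω`, `r > 0`,
with comparability constants depending only on `ε` and `M`. -/
theorem statement8 (φ : ℝ → ℝ) (M : ℝ)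
    (hφ : ∀ s t, |φ s - φ t| ≤ M * |s - t|) (hφ0 : φ 0 = 0) (hM0 : 0 ≤ M)
    (ε : ℝ) (hε : -1 < ε) :
    ∃ c C : ℝ, 0 < c ∧ c ≤ C ∧ ∀ x ∈ gBdry φ, ∀ r : ℝ, 0 < r →
      ENNReal.ofReal (c * (r * (max (‖x‖) r) ^ ε))
          ≤ sigmaW φ ε (Metric.ball x r ∩ gBdry φ) ∧
        sigmaW φ ε (Metric.ball x r ∩ gBdry φ)
          ≤ ENNReal.ofReal (C * (r * (max (‖x‖) r) ^ ε)) := by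
  classical
  have hc : Continuous φ := by
    have hlip : LipschitzWith (Real.toNNReal M) φ := by
      apply LipschitzWith.of_dist_le_mul
      intro a b
      rw [Real.dist_eq, Real.dist_eq]
      calc |φ a - φ b| ≤ M * |a - b| := hφ a b
      _ ≤ (Real.toNNReal M : ℝ) * |a - b| := by
            apply mul_le_mul_of_nonneg_right _ (abs_nonneg _)
            rw [Real.coe_toNNReal M hM0]
    exact hlip.continuous
  set K : ℝ := Real.sqrt (1 + M^2) with hKdef
  have hK1 : 1 ≤ K := by
    nlinarith [Real.sq_sqrt (show (0:ℝ) ≤ 1 + M^2 by nlinarith),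
      Real.sqrt_nonneg (1 + M^2), sq_nonneg M]
  have hK0 : 0 < K := by linarith
  have hKe : (0:ℝ) < K ^ |ε| := Real.rpow_pos_of_pos hK0 _
  have hKen : (0:ℝ) < K ^ (-|ε|) := Real.rpow_pos_of_pos hK0 _
  have hKe1 : K ^ (-|ε|) ≤ 1 :=
    Real.rpow_le_one_of_one_le_of_nonpos hK1 (neg_nonpos.2 (abs_nonneg ε))
  have hKe1' : (1:ℝ) ≤ K ^ |ε| := Real.one_le_rpow hK1 (abs_nonneg ε)
  set c₀ : ℝ := min (2*(2:ℝ)^(-|ε|)) ((1/2)*(12:ℝ)^(-|ε|)) with hc₀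
  set C₀ : ℝ := max (2*(2:ℝ)^(|ε|)) (6*(3:ℝ)^(|ε|)/(ε+1)) with hC₀
  have hc₀pos : 0 < c₀ := by
    apply lt_min
    · positivity
    · positivity
  have hC₀pos : 0 < C₀ :=
    lt_of_lt_of_le (by positivity : (0:ℝ) < 2*(2:ℝ)^(|ε|)) (le_max_left _ _)
  have hc₀C₀ : c₀ ≤ C₀ := by
    have h1 : c₀ ≤ 2*(2:ℝ)^(-|ε|) := min_le_left _ _
    have h2 : 2*(2:ℝ)^(|ε|) ≤ C₀ := le_max_left _ _
    have h3 : (2:ℝ)^(-|ε|) ≤ (2:ℝ)^(|ε|) := by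
      apply Real.rpow_le_rpow_of_exponent_le (by norm_num)
      have := abs_nonneg ε; linarith
    linarith
  refine ⟨c₀ * K^(-|ε|) * K^(-|ε|) / K, C₀ * (K * K^(|ε|)) * K^(|ε|), by positivity, ?_, ?_⟩
  · have h1 : c₀ * K^(-|ε|) * K^(-|ε|) / K ≤ c₀ := by
      calc c₀ * K^(-|ε|) * K^(-|ε|) / K ≤ c₀ * 1 * 1 / 1 := by gcongr <;> norm_num
      _ = c₀ := by ring
    have h2 : C₀ ≤ C₀ * (K * K^(|ε|)) * K^(|ε|) := by
      calc C₀ = C₀ * (1*1) * 1 := by ring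
      _ ≤ C₀ * (K * K^(|ε|)) * K^(|ε|) := by gcongr <;> norm_num
    linarith
  intro x hx r hr
  -- setup
  set s : ℝ := x.re with hs
  have hxb : x = bmap φ s := by
    apply Complex.ext
    · rfl
    · exact hx
  have hB : MeasurableSet (Metric.ball x r ∩ gBdry φ) := by
    apply (Metric.isOpen_ball.measurableSet).inter
    have : IsClosed (gBdry φ) := isClosed_eq Complex.continuous_im (hc.comp Complex.continuous_re)
    exact this.measurableSet
  have hbm : ∀ t, bmap φ t ∈ gBdry φ := fun t => rfl
  have hb0 : bmap φ 0 = 0 := by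
    apply Complex.ext
    · rfl
    · exact hφ0
  -- comparisons |t| ≤ |bmap t| ≤ K |t|
  have habs : ∀ t : ℝ, |t| ≤ ‖bmap φ t‖ ∧ ‖bmap φ t‖ ≤ K * |t| := by
    intro t
    have h := s8_bmap_dist hφ hM0 0 t
    rw [hb0, sub_zero, sub_zero] at h
    exact h
  -- preimage sandwich
  set T : Set ℝ := bmap φ ⁻¹' (Metric.ball x r ∩ gBdry φ) with hT
  have hTmem : ∀ t, t ∈ T ↔ ‖bmap φ t - x‖ < r := by
    intro t
    simp only [hT, Set.mem_preimage, Set.mem_inter_iff, Metric.mem_ball, Complex.dist_eq]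
    exact ⟨fun h => h.1, fun h => ⟨h, hbm t⟩⟩
  have hTsub : T ⊆ Set.Ioo (s-r) (s+r) := by
    intro t ht
    rw [hTmem] at ht
    have h := (s8_bmap_dist hφ hM0 s t).1
    rw [← hxb] at h
    have : |t - s| < r := lt_of_le_of_lt h ht
    rw [abs_lt] at this
    constructor <;> linarith [this.1, this.2]
  have hTsup : Set.Ioo (s - r/K) (s + r/K) ⊆ T := by
    intro t ht
    rw [hTmem]
    have h := (s8_bmap_dist hφ hM0 s t).2
    rw [← hxb] at h
    have h2 : |t - s| < r/K := by
      rw [abs_lt]; constructor <;> [linarith [ht.1]; linarith [ht.2]]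
    calc ‖bmap φ t - x‖ ≤ K * |t - s| := h
    _ < K * (r/K) := by apply mul_lt_mul_of_pos_left h2 hK0
    _ = r := by field_simp
  -- weight bounds (pointwise, for t ≠ 0)
  have hsq : ∀ t : ℝ, 1 ≤ Real.sqrt (1 + deriv φ t ^ 2) ∧ Real.sqrt (1 + deriv φ t ^ 2) ≤ K := by
    intro t
    have hd : |deriv φ t| ≤ M := s8_abs_deriv_le hφ hM0 t
    have hd2 : deriv φ t ^ 2 ≤ M ^ 2 := by nlinarith [sq_abs (deriv φ t), abs_nonneg (deriv φ t)]
    constructor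
    · have h := Real.sqrt_le_sqrt (show (1:ℝ) ≤ 1 + deriv φ t ^2 by nlinarith [sq_nonneg (deriv φ t)])
      simpa using h
    · apply Real.sqrt_le_sqrt; nlinarith
  have hwlo : ∀ t : ℝ, t ≠ 0 →
      K^(-|ε|) * |t|^ε ≤ Real.sqrt (1 + deriv φ t ^ 2) * ‖bmap φ t‖ ^ ε := by
    intro t ht
    have ht0 : 0 < |t| := abs_pos.2 ht
    have hA : 0 < ‖bmap φ t‖ := lt_of_lt_of_le ht0 (habs t).1
    have h1 : |t| ≤ K * ‖bmap φ t‖ := by nlinarith [(habs t).1]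
    have h2 : ‖bmap φ t‖ ≤ K * |t| := (habs t).2
    have hcmp : K^(-|ε|) * |t|^ε ≤ ‖bmap φ t‖ ^ ε :=
      s8_rpow_comp' hK1 ht0 hA h1 h2 ε
    calc K^(-|ε|) * |t|^ε ≤ ‖bmap φ t‖ ^ ε := hcmp
    _ = 1 * ‖bmap φ t‖ ^ ε := (one_mul _).symm
    _ ≤ Real.sqrt (1 + deriv φ t ^ 2) * ‖bmap φ t‖ ^ ε :=
        mul_le_mul_of_nonneg_right (hsq t).1 (Real.rpow_nonneg hA.le ε)
  have hwup : ∀ t : ℝ, t ≠ 0 →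
      Real.sqrt (1 + deriv φ t ^ 2) * ‖bmap φ t‖ ^ ε ≤ (K * K^(|ε|)) * |t|^ε := by
    intro t ht
    have ht0 : 0 < |t| := abs_pos.2 ht
    have hA : 0 < ‖bmap φ t‖ := lt_of_lt_of_le ht0 (habs t).1
    have h1 : ‖bmap φ t‖ ≤ K * |t| := (habs t).2
    have h2 : |t| ≤ K * ‖bmap φ t‖ := by nlinarith [(habs t).1]
    have hcmp : ‖bmap φ t‖ ^ ε ≤ K^(|ε|) * |t|^ε :=
      s8_rpow_comp hK1 hA ht0 h1 h2 ε
    calc Real.sqrt (1 + deriv φ t ^ 2) * ‖bmap φ t‖ ^ ε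
        ≤ K * (K^(|ε|) * |t|^ε) := by
          apply mul_le_mul (hsq t).2 hcmp (Real.rpow_nonneg hA.le ε) hK0.le
    _ = (K * K^(|ε|)) * |t|^ε := by ring
  -- X comparisons
  have hsx : |s| ≤ ‖x‖ ∧ ‖x‖ ≤ K * |s| := by
    rw [hxb]; exact habs s
  set Xx : ℝ := max (‖x‖) r with hXx
  have hXxpos : 0 < Xx := lt_of_lt_of_le hr (le_max_right _ _)
  -- a.e. t ≠ 0
  have h0 : ∀ᵐ t : ℝ ∂volume, t ≠ 0 := by
    have hset : {t : ℝ | ¬ t ≠ 0} = {0} := by ext t; simp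
    rw [MeasureTheory.ae_iff, hset]
    exact measure_singleton 0
  have hmw : Measurable (fun t : ℝ => ENNReal.ofReal (Real.sqrt (1 + deriv φ t ^ 2))
      * ENNReal.ofReal (‖bmap φ t‖ ^ ε)) := by
    apply Measurable.fun_mul
    · apply ENNReal.measurable_ofReal.comp
      exact Real.continuous_sqrt.measurable.comp
        ((measurable_const.add ((measurable_deriv φ).pow_const 2)))
    · exact ENNReal.measurable_ofReal.comp
        ((continuous_norm.measurable.comp
          (s8_bmap_continuous hc).measurable).pow_const ε)
  rw [s8_sigmaW_eq hc ε hB, ← hT]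
  constructor
  · -- LOWER BOUND
    have hrK : 0 < r / K := by positivity
    have hcore := (s8_core hε s hrK).1
    set X' : ℝ := max |s| (r/K) with hX'
    have hX'pos : 0 < X' := lt_of_lt_of_le hrK (le_max_right _ _)
    -- Xx ≤ K * X' and X' ≤ K * Xx
    have hcmp1 : Xx ≤ K * X' := by
      apply max_le
      · calc ‖x‖ ≤ K * |s| := hsx.2
        _ ≤ K * X' := by apply mul_le_mul_of_nonneg_left (le_max_left _ _) hK0.le
      · calc r = K * (r/K) := by field_simp
        _ ≤ K * X' := by apply mul_le_mul_of_nonneg_left (le_max_right _ _) hK0.le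
    have hcmp2 : X' ≤ K * Xx := by
      apply max_le
      · calc |s| ≤ ‖x‖ := hsx.1
        _ ≤ Xx := le_max_left _ _
        _ ≤ K * Xx := by nlinarith
      · calc r/K ≤ r := by rw [div_le_iff₀ hK0]; nlinarith
        _ ≤ Xx := le_max_right _ _
        _ ≤ K * Xx := by nlinarith
    have hXcmp : K^(-|ε|) * Xx^ε ≤ X'^ε := s8_rpow_comp' hK1 hXxpos hX'pos hcmp1 hcmp2 ε
    calc ENNReal.ofReal (c₀ * K^(-|ε|) * K^(-|ε|) / K * (r * Xx ^ ε))
        ≤ ENNReal.ofReal (K^(-|ε|) * (c₀ * (r/K * X' ^ ε))) := by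
          apply ENNReal.ofReal_le_ofReal
          have hXxε : (0:ℝ) < Xx ^ ε := Real.rpow_pos_of_pos hXxpos ε
          calc c₀ * K^(-|ε|) * K^(-|ε|) / K * (r * Xx ^ ε)
              = K^(-|ε|) * (c₀ * (r/K * (K^(-|ε|) * Xx^ε))) := by field_simp
          _ ≤ K^(-|ε|) * (c₀ * (r/K * X'^ε)) := by
                apply mul_le_mul_of_nonneg_left _ hKen.le
                apply mul_le_mul_of_nonneg_left _ hc₀pos.le
                apply mul_le_mul_of_nonneg_left hXcmp (by positivity)
    _ = ENNReal.ofReal (K^(-|ε|)) * ENNReal.ofReal (c₀ * (r/K * X' ^ ε)) :=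
        ENNReal.ofReal_mul hKen.le
    _ ≤ ENNReal.ofReal (K^(-|ε|)) * ∫⁻ t in Set.Ioo (s-r/K) (s+r/K), ENNReal.ofReal (|t| ^ ε) :=
        by exact mul_le_mul_right hcore _
    _ = ∫⁻ t in Set.Ioo (s-r/K) (s+r/K), ENNReal.ofReal (K^(-|ε|)) * ENNReal.ofReal (|t| ^ ε) :=
        (lintegral_const_mul _ (s8_meas_integrand ε)).symm
    _ ≤ ∫⁻ t in Set.Ioo (s-r/K) (s+r/K),
          ENNReal.ofReal (Real.sqrt (1 + deriv φ t ^ 2))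
            * ENNReal.ofReal (‖bmap φ t‖ ^ ε) := by
        apply setLIntegral_mono_ae hmw.aemeasurable
        filter_upwards [h0] with t ht _
        rw [← ENNReal.ofReal_mul hKen.le, ← ENNReal.ofReal_mul (Real.sqrt_nonneg _)]
        exact ENNReal.ofReal_le_ofReal (hwlo t ht)
    _ ≤ ∫⁻ t in T, ENNReal.ofReal (Real.sqrt (1 + deriv φ t ^ 2))
          * ENNReal.ofReal (‖bmap φ t‖ ^ ε) := lintegral_mono_set hTsup
  · -- UPPER BOUND
    have hcore := (s8_core hε s hr).2
    set Xs : ℝ := max |s| r with hXs2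
    have hXspos : 0 < Xs := lt_of_lt_of_le hr (le_max_right _ _)
    have hcmp1 : Xs ≤ K * Xx := by
      apply max_le
      · calc |s| ≤ ‖x‖ := hsx.1
        _ ≤ Xx := le_max_left _ _
        _ ≤ K * Xx := by nlinarith
      · calc r ≤ Xx := le_max_right _ _
        _ ≤ K * Xx := by nlinarith
    have hcmp2 : Xx ≤ K * Xs := by
      apply max_le
      · calc ‖x‖ ≤ K * |s| := hsx.2
        _ ≤ K * Xs := by apply mul_le_mul_of_nonneg_left (le_max_left _ _) hK0.le
      · calc r ≤ Xs := le_max_right _ _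
        _ ≤ K * Xs := by nlinarith
    have hXcmp : Xs^ε ≤ K^(|ε|) * Xx^ε := s8_rpow_comp hK1 hXspos hXxpos hcmp1 hcmp2 ε
    calc ∫⁻ t in T, ENNReal.ofReal (Real.sqrt (1 + deriv φ t ^ 2))
          * ENNReal.ofReal (‖bmap φ t‖ ^ ε)
        ≤ ∫⁻ t in T, ENNReal.ofReal (K * K^(|ε|)) * ENNReal.ofReal (|t| ^ ε) := by
          apply setLIntegral_mono_ae
            (Measurable.aemeasurable (measurable_const.mul (s8_meas_integrand ε)))
          filter_upwards [h0] with t ht _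
          rw [Pi.mul_apply, ← ENNReal.ofReal_mul (Real.sqrt_nonneg _),
            ← ENNReal.ofReal_mul (show (0:ℝ) ≤ K * K^(|ε|) by positivity)]
          exact ENNReal.ofReal_le_ofReal (hwup t ht)
    _ ≤ ∫⁻ t in Set.Ioo (s-r) (s+r), ENNReal.ofReal (K * K^(|ε|)) * ENNReal.ofReal (|t| ^ ε) :=
        lintegral_mono_set hTsub
    _ = ENNReal.ofReal (K * K^(|ε|)) * ∫⁻ t in Set.Ioo (s-r) (s+r), ENNReal.ofReal (|t| ^ ε) :=
        lintegral_const_mul _ (s8_meas_integrand ε)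
    _ ≤ ENNReal.ofReal (K * K^(|ε|)) * ENNReal.ofReal (C₀ * (r * Xs ^ ε)) :=
        mul_le_mul_right hcore _
    _ = ENNReal.ofReal ((K * K^(|ε|)) * (C₀ * (r * Xs ^ ε))) :=
        (ENNReal.ofReal_mul (by positivity)).symm
    _ ≤ ENNReal.ofReal (C₀ * (K * K^(|ε|)) * K^(|ε|) * (r * Xx ^ ε)) := by
        apply ENNReal.ofReal_le_ofReal
        have h1 : r * Xs ^ ε ≤ r * (K^(|ε|) * Xx^ε) :=
          mul_le_mul_of_nonneg_left hXcmp hr.le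
        have h2 : (0:ℝ) ≤ K * K^(|ε|) := by positivity
        calc (K * K^(|ε|)) * (C₀ * (r * Xs ^ ε))
            ≤ (K * K^(|ε|)) * (C₀ * (r * (K^(|ε|) * Xx^ε))) := by
              apply mul_le_mul_of_nonneg_left _ h2
              exact mul_le_mul_of_nonneg_left h1 hC₀pos.le
        _ = C₀ * (K * K^(|ε|)) * K^(|ε|) * (r * Xx ^ ε) := by ring
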